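/- arXiv:2105.01555 — 7 statements merged into one kernel-verified Lean document; each statement's English description precedes it below -/
import Mathlib

section
/- Let N ∈ ℕ and let M be a complex matrix indexed by pairs of words in [N]^* such that for each k ∈ ℕ the finite submatrix (M_{α,β})_{α,β ∈ [N]^{≤k}} is positive semidefinite. Then there exist a sequence of finite-dimensional complex Hilbert spaces H₀, H₁, H₂, …, vectors |α,k⟩ ∈ H_k for each word α ∈ [N]^{≤k} satisfying M_{α,β} = ⟨α,k | β,k⟩ for all α,β ∈ [N]^{≤k}, and linear isometries W_k : H_k → H_{k+1} satisfying W_k |α,k⟩ = |α,k+1⟩ for each α ∈ [N]^{≤k}. -/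
open scoped ComplexOrder

/-- Words in the alphabet `[N] = {1,…,N}`; the empty list is the empty word `0`. -/
abbrev Word (N : ℕ) := List (Fin N)

/-- The submatrix of `M` indexed by words of length at most `k` is a finite matrix. -/
noncomputable instance wordLEFintype (N k : ℕ) : Fintype {w : Word N // w.length ≤ k} :=
  (List.finite_length_le (Fin N) k).fintype

/-- The `k`-th certificate: the submatrix of `M` indexed by words of length at most `k`. -/
def cert {N : ℕ} (M : Word N → Word N → ℂ) (k : ℕ) :
    Matrix {w : Word N // w.length ≤ k} {w : Word N // w.length ≤ k} ℂ :=
  Matrix.of fun a b => M a.1 b.1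

/-- A finite-dimensional complex Hilbert space. -/
structure FDHilbert where
  carrier : Type
  [grp : NormedAddCommGroup carrier]
  [ips : InnerProductSpace ℂ carrier]
  [fd : FiniteDimensional ℂ carrier]

attribute [instance] FDHilbert.grp FDHilbert.ips FDHilbert.fd

namespace Stmt0Aux

variable {N : ℕ} (M : Word N → Word N → ℂ)

/-- Auxiliary: `∑_α conj (f α) * M α β`. -/
noncomputable def ipA (f : Word N →₀ ℂ) (β : Word N) : ℂ :=
  f.sum fun α c => (starRingEnd ℂ) c * M α β

/-- The semidefinite sesquilinear form induced by `M` on finitely supported functions. -/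
noncomputable def ip (f g : Word N →₀ ℂ) : ℂ :=
  g.sum fun β d => ipA M f β * d

lemma ipA_add (f f' : Word N →₀ ℂ) (β : Word N) :
    ipA M (f + f') β = ipA M f β + ipA M f' β :=
  Finsupp.sum_add_index' (by simp) (fun α b₁ b₂ => by rw [map_add, add_mul])

lemma ipA_smul (r : ℂ) (f : Word N →₀ ℂ) (β : Word N) :
    ipA M (r • f) β = (starRingEnd ℂ) r * ipA M f β := by
  unfold ipA
  rw [Finsupp.sum_smul_index' (fun i => by simp), Finsupp.mul_sum]
  exact Finsupp.sum_congr fun α _ => by simp [smul_eq_mul, map_mul, mul_assoc]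

lemma ip_add_left (f f' g : Word N →₀ ℂ) :
    ip M (f + f') g = ip M f g + ip M f' g := by
  unfold ip
  rw [← Finsupp.sum_add]
  exact Finsupp.sum_congr fun β _ => by rw [ipA_add, add_mul]

lemma ip_smul_left (r : ℂ) (f g : Word N →₀ ℂ) :
    ip M (r • f) g = (starRingEnd ℂ) r * ip M f g := by
  unfold ip
  rw [Finsupp.mul_sum]
  exact Finsupp.sum_congr fun β _ => by rw [ipA_smul, mul_assoc]

lemma ip_expand (f g : Word N →₀ ℂ) :
    ip M f g = ∑ β ∈ g.support, ∑ α ∈ f.support,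
      (starRingEnd ℂ) (f α) * M α β * g β := by
  unfold ip ipA Finsupp.sum
  exact Finset.sum_congr rfl fun β _ => Finset.sum_mul ..

lemma ip_single_single (α β : Word N) :
    ip M (Finsupp.single α 1) (Finsupp.single β 1) = M α β := by
  unfold ip
  rw [Finsupp.sum_single_index (by simp)]
  unfold ipA
  rw [Finsupp.sum_single_index (by simp)]
  simp

/-- A sum over all words of length at most `k` of a function vanishing off the support
of `f` equals the sum over the support of `f`. -/
lemma sum_subtype_support {f : Word N →₀ ℂ} {k : ℕ} (F : Word N → ℂ)
    (hlen : ∀ w ∈ f.support, w.length ≤ k)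
    (hF : ∀ w, f w = 0 → F w = 0) :
    ∑ a : {w : Word N // w.length ≤ k}, F a.1 = ∑ w ∈ f.support, F w := by
  classical
  have hT := List.finite_length_le (Fin N) k
  rw [← Finset.sum_subtype (p := fun w : Word N => w.length ≤ k) hT.toFinset
    (fun w => hT.mem_toFinset) F]
  exact (Finset.sum_subset (fun w hw => hT.mem_toFinset.2 (hlen w hw))
    (fun w _ hnw => hF w (Finsupp.notMem_support_iff.1 hnw))).symm

variable {M} (hM : ∀ k : ℕ, (cert M k).PosSemidef)
include hM

lemma conjM (α β : Word N) : (starRingEnd ℂ) (M β α) = M α β :=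
  (hM (max α.length β.length)).isHermitian.apply
    ⟨α, le_max_left _ _⟩ ⟨β, le_max_right _ _⟩

lemma ip_conj_symm (f g : Word N →₀ ℂ) :
    (starRingEnd ℂ) (ip M g f) = ip M f g := by
  rw [ip_expand, ip_expand]
  simp only [map_sum]
  rw [Finset.sum_comm]
  refine Finset.sum_congr rfl fun β hβ => Finset.sum_congr rfl fun α hα => ?_
  simp only [map_mul, Complex.conj_conj, conjM hM]
  ring

lemma ip_self_nonneg (f : Word N →₀ ℂ) : 0 ≤ ip M f f := by
  classical
  set k := f.support.sup List.length with hkdef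
  have hlen : ∀ w ∈ f.support, w.length ≤ k := fun w hw => Finset.le_sup (f := List.length) hw
  set x : {w : Word N // w.length ≤ k} → ℂ := fun a => f a.1 with hx
  have h0 := (hM k).dotProduct_mulVec_nonneg x
  have inner_eq : ∀ α : Word N,
      (∑ b : {w : Word N // w.length ≤ k}, M α b.1 * f b.1) = ∑ β ∈ f.support, M α β * f β :=
    fun α => sum_subtype_support (fun w => M α w * f w) hlen (fun w h => by simp [h])
  have e1 : dotProduct (star x) ((cert M k).mulVec x)
      = ∑ a : {w : Word N // w.length ≤ k},
      (starRingEnd ℂ) (f a.1) * ∑ b : {w : Word N // w.length ≤ k}, M a.1 b.1 * f b.1 := by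
    simp [dotProduct, Matrix.mulVec, cert, RCLike.star_def, hx]
  have e2 : (∑ a : {w : Word N // w.length ≤ k},
      (starRingEnd ℂ) (f a.1) * ∑ b : {w : Word N // w.length ≤ k}, M a.1 b.1 * f b.1)
      = ∑ α ∈ f.support, (starRingEnd ℂ) (f α) * ∑ β ∈ f.support, M α β * f β := by
    rw [sum_subtype_support
      (fun w => (starRingEnd ℂ) (f w) * ∑ b : {w : Word N // w.length ≤ k}, M w b.1 * f b.1)
      hlen (fun w h => by simp [h])]
    exact Finset.sum_congr rfl fun α _ => by rw [inner_eq]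
  have e3 : (∑ α ∈ f.support, (starRingEnd ℂ) (f α) * ∑ β ∈ f.support, M α β * f β)
      = ip M f f := by
    rw [ip_expand, Finset.sum_comm]
    refine Finset.sum_congr rfl fun α _ => ?_
    rw [Finset.mul_sum]
    exact Finset.sum_congr rfl fun β _ => (mul_assoc _ _ _).symm
  rw [e1, e2, e3] at h0
  exact h0

/-- The pre-inner-product-space structure induced by `M`. -/
noncomputable def preCore : PreInnerProductSpace.Core ℂ (Word N →₀ ℂ) where
  inner := ip M
  conj_inner_symm := fun f g => ip_conj_symm hM f g
  re_inner_nonneg := fun f => by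
    have h := (Complex.le_def.1 (ip_self_nonneg hM f)).1
    simpa using h
  add_left := ip_add_left M
  smul_left := fun f g r => ip_smul_left M r f g

/-- Upgrade a `PreInnerProductSpace.Core` to an `InnerProductSpace` over the induced
seminormed group structure. -/
noncomputable def ofPreCore {F : Type*} [AddCommGroup F] [Module ℂ F]
    (c : PreInnerProductSpace.Core ℂ F) :
    letI := c
    letI := InnerProductSpace.Core.toSeminormedAddCommGroup (𝕜 := ℂ) (F := F)
    InnerProductSpace ℂ F :=
  letI := c
  letI := InnerProductSpace.Core.toSeminormedAddCommGroup (𝕜 := ℂ) (F := F)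
  letI : NormedSpace ℂ F := InnerProductSpace.Core.toNormedSpace
  { c with
    norm_sq_eq_re_inner := fun x => by
      have h₂ : 0 ≤ RCLike.re (c.inner x x) := c.re_inner_nonneg x
      show Real.sqrt (RCLike.re (c.inner x x)) ^ 2 = RCLike.re (c.inner x x)
      rw [Real.sq_sqrt h₂] }

end Stmt0Aux

/-- Lemma on Gram decompositions for the synchronous NPA hierarchy:
if every finite submatrix `(M_{α,β})_{α,β ∈ [N]^{≤k}}` is positive semidefinite, then there are
finite-dimensional Hilbert spaces `H k`, vectors `|α,k⟩ ∈ H k` for words `α` of length at most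
`k` realizing `M` as a Gram matrix, and linear isometries `W k : H k → H (k+1)` sending
`|α,k⟩` to `|α,k+1⟩`. -/
theorem stmt0 (N : ℕ) (M : Word N → Word N → ℂ)
    (hM : ∀ k : ℕ, (cert M k).PosSemidef) :
    ∃ (H : ℕ → FDHilbert) (v : (k : ℕ) → Word N → (H k).carrier)
      (W : (k : ℕ) → (H k).carrier →ₗᵢ[ℂ] (H (k + 1)).carrier),
      (∀ (k : ℕ) (α β : Word N), α.length ≤ k → β.length ≤ k →
        M α β = inner ℂ (v k α) (v k β)) ∧
      (∀ (k : ℕ) (α : Word N), α.length ≤ k → W k (v k α) = v (k + 1) α) := by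
  classical
  letI c : PreInnerProductSpace.Core ℂ (Word N →₀ ℂ) := Stmt0Aux.preCore hM
  letI : SeminormedAddCommGroup (Word N →₀ ℂ) :=
    InnerProductSpace.Core.toSeminormedAddCommGroup (𝕜 := ℂ)
  letI : InnerProductSpace ℂ (Word N →₀ ℂ) := Stmt0Aux.ofPreCore c
  let Q := SeparationQuotient (Word N →₀ ℂ)
  let u : Word N → Q := fun α => SeparationQuotient.mk (Finsupp.single α 1)
  have hu : ∀ α β : Word N, (inner ℂ (u α) (u β) : ℂ) = M α β := by
    intro α β
    rw [SeparationQuotient.inner_mk_mk]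
    exact Stmt0Aux.ip_single_single M α β
  let S : ℕ → Submodule ℂ Q := fun k => Submodule.span ℂ (u '' {α | α.length ≤ k})
  have hS : ∀ k, S k ≤ S (k + 1) := fun k =>
    Submodule.span_mono (Set.image_mono fun α hα => le_trans hα (Nat.le_succ k))
  haveI : ∀ k, FiniteDimensional ℂ (S k) := fun k =>
    FiniteDimensional.span_of_finite ℂ ((List.finite_length_le (Fin N) k).image u)
  refine ⟨fun k => ⟨S k⟩,
    fun k α => if h : α.length ≤ k then ⟨u α, Submodule.subset_span ⟨α, h, rfl⟩⟩ else 0,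
    fun k => ⟨Submodule.inclusion (hS k), fun x => rfl⟩, ?_, ?_⟩
  · intro k α β hα hβ
    simp only [dif_pos hα, dif_pos hβ]
    exact (hu α β).symm
  · intro k α hα
    simp only [dif_pos hα, dif_pos (hα.trans (Nat.le_succ k))]
    rfl
end

section
/- Let d ∈ ℕ. The matrix p_{sic,d} is a matricially spanning quantum correlation of dimension d if and only if there exists a SIC-POVM in M_d(ℂ). -/
/-- `p` is a matricially spanning quantum correlation of dimension `d`: there are projections
`P₁,…,P_N ∈ M_d(ℂ)` spanning `M_d(ℂ)` with `p x y = (1/d)·Tr(P_x P_y)`. -/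
def IsMatSpanning (N d : ℕ) (p : Fin N → Fin N → ℂ) : Prop :=
  ∃ P : Fin N → Matrix (Fin d) (Fin d) ℂ,
    (∀ x, (P x).IsHermitian ∧ P x * P x = P x) ∧
    Submodule.span ℂ (Set.range P) = ⊤ ∧
    (∀ x y, p x y = (1 / (d : ℂ)) * (P x * P y).trace)

/-- The correlation `p_{sic,d}`: `1/d` on the diagonal and `1/(d(d+1))` off the diagonal. -/
noncomputable def pSIC (d : ℕ) : Fin (d ^ 2) → Fin (d ^ 2) → ℂ :=
  fun x y => if x = y then 1 / (d : ℂ) else 1 / ((d : ℂ) * ((d : ℂ) + 1))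

/-- `P` is a SIC-POVM in `M_d(ℂ)`: `d²` rank-one projections spanning `M_d(ℂ)`, summing to
`d·I_d`, with constant pairwise trace inner products. -/
def IsSICPOVM (d : ℕ) (P : Fin (d ^ 2) → Matrix (Fin d) (Fin d) ℂ) : Prop :=
  (∀ i, (P i).IsHermitian ∧ P i * P i = P i ∧ (P i).rank = 1) ∧
  Submodule.span ℂ (Set.range P) = ⊤ ∧
  ∑ i, P i = (d : ℂ) • (1 : Matrix (Fin d) (Fin d) ℂ) ∧
  ∃ c : ℂ, ∀ i j, i ≠ j → (P i * P j).trace = c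

open Matrix

lemma trace_idem {d : ℕ} (A : Matrix (Fin d) (Fin d) ℂ) (h : A * A = A) :
    A.trace = (A.rank : ℂ) := by
  have hf : A.mulVecLin ∘ₗ A.mulVecLin = A.mulVecLin := by
    rw [← Matrix.mulVecLin_mul, h]
  have hproj : LinearMap.IsProj (LinearMap.range A.mulVecLin) A.mulVecLin :=
    ⟨fun x => LinearMap.mem_range_self _ x, by
      rintro x ⟨y, rfl⟩
      exact DFunLike.congr_fun hf y⟩
  have htr := hproj.trace
  rw [Matrix.rank, ← htr, LinearMap.trace_eq_matrix_trace ℂ (Pi.basisFun ℂ (Fin d)),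
    LinearMap.toMatrix_eq_toMatrix']
  congr 1
  have : A.mulVecLin = Matrix.toLin' A := rfl
  rw [this, LinearMap.toMatrix'_toLin']

lemma trace_nondeg {d : ℕ} (A : Matrix (Fin d) (Fin d) ℂ) (hA : A.IsHermitian)
    (h : (A * A).trace = 0) : A = 0 := by
  have h2 : (Aᴴ * A).trace = 0 := by rw [hA.eq]; exact h
  have key : (Aᴴ * A).trace = ((∑ j, ∑ k, Complex.normSq (A k j) : ℝ) : ℂ) := by
    simp only [Matrix.trace, Matrix.diag, Matrix.mul_apply, Matrix.conjTranspose_apply]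
    push_cast
    congr 1; ext j; congr 1; ext k
    rw [Complex.normSq_eq_conj_mul_self]; rfl
  rw [key, Complex.ofReal_eq_zero] at h2
  have hz : ∀ j ∈ Finset.univ, ∑ k, Complex.normSq (A k j) = 0 := by
    intro j _
    have := (Finset.sum_eq_zero_iff_of_nonneg (fun j _ =>
      Finset.sum_nonneg (fun k _ => Complex.normSq_nonneg _))).mp h2
    exact this j (Finset.mem_univ j)
  ext k j
  have := (Finset.sum_eq_zero_iff_of_nonneg (fun k _ => Complex.normSq_nonneg _)).mp
    (hz j (Finset.mem_univ j)) k (Finset.mem_univ k)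
  simpa using Complex.normSq_eq_zero.mp this

lemma sum_trace_helper {n d : ℕ} (P : Fin n → Matrix (Fin d) (Fin d) ℂ) (j : Fin n) :
    ((∑ i, P i) * P j).trace
      = (P j * P j).trace + ∑ i ∈ Finset.univ.erase j, (P i * P j).trace := by
  rw [Finset.sum_mul, Matrix.trace_sum, ← Finset.add_sum_erase _ _ (Finset.mem_univ j)]

/-- `p_{sic,d}` is a matricially spanning quantum correlation of dimension
`d` if and only if there exists a SIC-POVM in `M_d(ℂ)`. -/
theorem stmt10 (d : ℕ) :
    IsMatSpanning (d ^ 2) d (pSIC d) ↔ ∃ P, IsSICPOVM d P := by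
  rcases Nat.eq_zero_or_pos d with rfl | hd
  · -- d = 0 : both sides trivially true
    haveI : Subsingleton (Matrix (Fin 0) (Fin 0) ℂ) :=
      ⟨fun a b => by ext i; exact i.elim0⟩
    have hz : ∀ x : Fin (0 ^ 2), False := fun x => (Fin.cast (by norm_num) x : Fin 0).elim0
    have hspan : Submodule.span ℂ
        (Set.range (fun _ : Fin (0 ^ 2) => (0 : Matrix (Fin 0) (Fin 0) ℂ))) = ⊤ := by
      rw [eq_top_iff]
      intro A _
      rw [Subsingleton.elim A 0]
      exact Submodule.zero_mem _
    refine iff_of_true ⟨fun _ => 0, fun x => absurd (hz x) not_false, hspan,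
      fun x y => absurd (hz x) not_false⟩
      ⟨fun _ => 0, ⟨fun i => absurd (hz i) not_false, hspan,
      Subsingleton.elim _ _, 0, fun i j _ => absurd (hz i) not_false⟩⟩
  · have hd0 : (d : ℂ) ≠ 0 := Nat.cast_ne_zero.mpr (by omega)
    have hdp1 : (d : ℂ) + 1 ≠ 0 := by
      have : ((d : ℂ) + 1) = ((d + 1 : ℕ) : ℂ) := by push_cast; ring
      rw [this]
      exact Nat.cast_ne_zero.mpr (by omega)
    constructor
    · rintro ⟨P, hproj, hspan, htr⟩
      have htr1 : ∀ x, (P x * P x).trace = 1 := by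
        intro x
        have h := htr x x
        simp only [pSIC, if_pos rfl, ↓reduceIte] at h
        have := h.symm
        field_simp at this ⊢
        exact this
      have htrc : ∀ x y, x ≠ y → (P x * P y).trace = 1 / ((d : ℂ) + 1) := by
        intro x y hxy
        have h := (htr x y).symm
        simp only [pSIC, if_neg hxy] at h
        field_simp at h
        rw [eq_div_iff hdp1]
        apply mul_left_cancel₀ hd0
        linear_combination (d : ℂ) * h
      have traceP : ∀ x, (P x).trace = 1 := by
        intro x
        rw [← (hproj x).2]
        exact htr1 x
      have hrank : ∀ x, (P x).rank = 1 := by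
        intro x
        have := trace_idem (P x) (hproj x).2
        rw [traceP x] at this
        exact_mod_cast this.symm
      -- the sum condition
      set M := (∑ i, P i) - (d : ℂ) • 1 with hMdef
      have hMP : ∀ j, (M * P j).trace = 0 := by
        intro j
        have h1 := sum_trace_helper P j
        have hsumerase : ∑ i ∈ Finset.univ.erase j, (P i * P j).trace
            = (((d ^ 2 - 1 : ℕ) : ℂ)) * (1 / ((d : ℂ) + 1)) := by
          rw [Finset.sum_congr rfl (fun i hi => htrc i j (Finset.ne_of_mem_erase hi)),
            Finset.sum_const, Finset.card_erase_of_mem (Finset.mem_univ j),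
            Finset.card_univ, Fintype.card_fin, nsmul_eq_mul]
        have hpow : 1 ≤ d ^ 2 := Nat.one_le_pow _ _ hd
        have hcast : ((d ^ 2 - 1 : ℕ) : ℂ) = (d : ℂ) ^ 2 - 1 := by
          push_cast [Nat.cast_sub hpow]; ring
        rw [Matrix.sub_mul, Matrix.trace_sub, h1, hsumerase, hcast, htr1 j,
          Matrix.smul_mul, Matrix.one_mul, Matrix.trace_smul, traceP j, smul_eq_mul]
        field_simp
        ring
      have hker : ∀ A : Matrix (Fin d) (Fin d) ℂ, (M * A).trace = 0 := by
        let L : Matrix (Fin d) (Fin d) ℂ →ₗ[ℂ] ℂ :=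
          { toFun := fun A => (M * A).trace
            map_add' := fun a b => by simp [Matrix.mul_add]
            map_smul' := fun c a => by simp [Matrix.mul_smul] }
        have hle : Submodule.span ℂ (Set.range P) ≤ LinearMap.ker L := by
          rw [Submodule.span_le]
          rintro _ ⟨j, rfl⟩
          exact hMP j
        intro A
        exact hle (hspan.symm ▸ Submodule.mem_top)
      have hMHerm : M.IsHermitian := by
        have hPH : ∀ i, (P i)ᴴ = P i := fun i => (hproj i).1
        show Mᴴ = M
        rw [hMdef]
        simp [Matrix.conjTranspose_sub, Matrix.conjTranspose_smul, hPH,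
          Matrix.conjTranspose_sum]
      have hM0 : M = 0 := trace_nondeg M hMHerm (hker M)
      have hsum : ∑ i, P i = (d : ℂ) • (1 : Matrix (Fin d) (Fin d) ℂ) := by
        have := sub_eq_zero.mp hM0
        exact this
      exact ⟨P, fun i => ⟨(hproj i).1, (hproj i).2, hrank i⟩, hspan, hsum,
        1 / ((d : ℂ) + 1), fun i j hij => htrc i j hij⟩
    · rintro ⟨P, hP, hspan, hsum, c, hc⟩
      have traceP : ∀ x, (P x).trace = 1 := by
        intro x
        rw [trace_idem (P x) (hP x).2.1, (hP x).2.2]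
        norm_num
      have htr1 : ∀ x, (P x * P x).trace = 1 := by
        intro x; rw [(hP x).2.1]; exact traceP x
      refine ⟨P, fun x => ⟨(hP x).1, (hP x).2.1⟩, hspan, ?_⟩
      intro x y
      by_cases hxy : x = y
      · subst hxy
        simp [pSIC, htr1 x]
      · -- off-diagonal : first get d ≥ 2
        have hnt : Nontrivial (Fin (d ^ 2)) := ⟨⟨x, y, hxy⟩⟩
        have hcard2 : 1 < d ^ 2 := by
          have := Fintype.one_lt_card_iff_nontrivial.mpr hnt
          simpa using this
        have hd2 : 2 ≤ d := by
          by_contra h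
          push_neg at h
          have : d ^ 2 ≤ 1 ^ 2 := Nat.pow_le_pow_left (by omega) 2
          omega
        have hdm1 : (d : ℂ) - 1 ≠ 0 := by
          have : (d : ℂ) ≠ 1 := by
            exact_mod_cast (by omega : d ≠ 1)
          exact sub_ne_zero.mpr this
        -- derive the value of c from the sum identity
        have h1 := sum_trace_helper P y
        rw [hsum] at h1
        have hsumerase : ∑ i ∈ Finset.univ.erase y, (P i * P y).trace
            = (((d ^ 2 - 1 : ℕ) : ℂ)) * c := by
          rw [Finset.sum_congr rfl (fun i hi => hc i y (Finset.ne_of_mem_erase hi)),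
            Finset.sum_const, Finset.card_erase_of_mem (Finset.mem_univ y),
            Finset.card_univ, Fintype.card_fin, nsmul_eq_mul]
        have hpow : 1 ≤ d ^ 2 := Nat.one_le_pow _ _ hd
        have hcast : ((d ^ 2 - 1 : ℕ) : ℂ) = (d : ℂ) ^ 2 - 1 := by
          push_cast [Nat.cast_sub hpow]; ring
        rw [hsumerase, hcast, htr1 y, Matrix.smul_mul, Matrix.one_mul,
          Matrix.trace_smul, traceP y, smul_eq_mul, mul_one] at h1
        -- h1 : (d : ℂ) = 1 + ((d:ℂ)^2 - 1) * c
        have hc1 : ((d : ℂ) + 1) * c = 1 := by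
          apply mul_left_cancel₀ hdm1
          linear_combination -h1
        have hcval : c = 1 / ((d : ℂ) + 1) := by
          rw [eq_div_iff hdp1, mul_comm]
          exact hc1
        rw [hc x y hxy, hcval]
        simp only [pSIC, if_neg hxy]
        rw [div_mul_div_comm, one_mul]
end

section
/- Let d ∈ ℕ, d ≥ 2, and let T₁ be the (d²+1)×(d²+1) matrix of the SIC certificate. Let L be the d²×(d²+1) real matrix with rows indexed 0,…,d²−1 and columns indexed 0,…,d² defined by: L_{0,0} = 1 and L_{0,j} = 1/d for j ≥ 1; and for 1 ≤ k ≤ d²−1, L_{k,j} = 0 for j < k, L_{k,k} = x_k, and L_{k,j} = −x_k/(d²−k) for j > k, where x_k = √(d²−k)/√((d+1)(d²−k+1)). Then Lᵀ L = T₁. -/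
open Matrix

/-- The SIC certificate `T₁`: the `(d²+1)×(d²+1)` real symmetric matrix with rows and columns
indexed by `{0,1,…,d²}`, with `(T₁)_{0,0} = 1`, `(T₁)_{0,x} = (T₁)_{x,0} = 1/d`,
`(T₁)_{x,x} = 1/d`, and `(T₁)_{x,y} = 1/(d(d+1))` for distinct `x,y ∈ {1,…,d²}`. -/
noncomputable def sicCert (d : ℕ) : Matrix (Fin (d ^ 2 + 1)) (Fin (d ^ 2 + 1)) ℝ :=
  Matrix.of fun x y =>
    if x = y then (if (x : ℕ) = 0 then 1 else 1 / d)
    else if (x : ℕ) = 0 ∨ (y : ℕ) = 0 then 1 / d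
    else 1 / (d * ((d : ℝ) + 1))

/-- `x_k = √(d²−k) / √((d+1)(d²−k+1))`. -/
noncomputable def sicX (d k : ℕ) : ℝ :=
  Real.sqrt ((d ^ 2 : ℝ) - k) / Real.sqrt (((d : ℝ) + 1) * ((d ^ 2 : ℝ) - k + 1))

/-- The `d² × (d²+1)` matrix `L` of Section 5.1: `L_{0,0} = 1`, `L_{0,j} = 1/d` for `j ≥ 1`;
and for `1 ≤ k ≤ d²−1`, `L_{k,j} = 0` for `j < k`, `L_{k,k} = x_k`, and
`L_{k,j} = −x_k/(d²−k)` for `j > k`. -/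
noncomputable def sicL (d : ℕ) : Matrix (Fin (d ^ 2)) (Fin (d ^ 2 + 1)) ℝ :=
  Matrix.of fun k j =>
    if (k : ℕ) = 0 then (if (j : ℕ) = 0 then 1 else 1 / d)
    else if (j : ℕ) < (k : ℕ) then 0
    else if (j : ℕ) = (k : ℕ) then sicX d k
    else -(sicX d k) / ((d ^ 2 : ℝ) - k)

lemma sicX_sq (d k : ℕ) (hk : k ≤ d ^ 2) :
    sicX d k ^ 2 = ((d ^ 2 : ℝ) - k) / (((d : ℝ) + 1) * ((d ^ 2 : ℝ) - k + 1)) := by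
  have h1 : (0 : ℝ) ≤ (d ^ 2 : ℝ) - k := by
    have : (k : ℝ) ≤ ((d ^ 2 : ℕ) : ℝ) := Nat.cast_le.mpr hk
    push_cast at this; linarith
  have h2 : (0 : ℝ) ≤ ((d : ℝ) + 1) * ((d ^ 2 : ℝ) - k + 1) := by
    have : (0:ℝ) ≤ (d:ℝ) := Nat.cast_nonneg d
    nlinarith
  rw [sicX, div_pow, Real.sq_sqrt h1, Real.sq_sqrt h2]

lemma sum_tele (d : ℕ) (hd : 2 ≤ d) :
    ∀ m, m < d ^ 2 →
    ∑ k ∈ Finset.Icc 1 m, (sicX d k / ((d ^ 2 : ℝ) - k)) ^ 2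
      = (1 / ((d : ℝ) + 1)) * (1 / ((d ^ 2 : ℝ) - m) - 1 / (d ^ 2 : ℝ)) := by
  intro m
  induction m with
  | zero => intro _; simp
  | succ m ih =>
    intro hm
    have hm' : m < d ^ 2 := Nat.lt_of_succ_lt hm
    rw [Finset.sum_Icc_succ_top (by omega : 1 ≤ m + 1), ih hm']
    have hx := sicX_sq d (m + 1) (le_of_lt hm)
    have hcast : ((m:ℝ) + 1) < ((d ^ 2 : ℕ) : ℝ) := by exact_mod_cast hm
    push_cast at hcast hx ⊢
    have hA : (0:ℝ) < (d ^ 2 : ℝ) - ((m:ℝ) + 1) := by linarith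
    have hB : (0:ℝ) < (d ^ 2 : ℝ) - (m:ℝ) := by linarith
    have hn : (0:ℝ) < (d ^ 2 : ℝ) := by positivity
    have hd1 : (0:ℝ) < (d:ℝ) + 1 := by positivity
    rw [div_pow, hx]
    field_simp
    ring

lemma sic_entry (d : ℕ) (hd : 2 ≤ d) (x y : Fin (d ^ 2 + 1)) (hxy : (x : ℕ) ≤ (y : ℕ)) :
    ∑ k : Fin (d ^ 2), sicL d k x * sicL d k y = sicCert d x y := by
  have hdr : (2:ℝ) ≤ (d:ℝ) := by exact_mod_cast hd
  have hn1 : 1 ≤ d ^ 2 := by nlinarith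
  have hxle : (x : ℕ) ≤ d ^ 2 := Nat.lt_succ_iff.mp x.isLt
  have hyle : (y : ℕ) ≤ d ^ 2 := Nat.lt_succ_iff.mp y.isLt
  set f : ℕ → ℝ := fun k =>
    (if k = 0 then (if (x : ℕ) = 0 then (1:ℝ) else 1 / (d:ℝ))
     else if (x : ℕ) < k then 0
     else if (x : ℕ) = k then sicX d k
     else -(sicX d k) / ((d ^ 2 : ℝ) - k)) *
    (if k = 0 then (if (y : ℕ) = 0 then (1:ℝ) else 1 / (d:ℝ))
     else if (y : ℕ) < k then 0
     else if (y : ℕ) = k then sicX d k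
     else -(sicX d k) / ((d ^ 2 : ℝ) - k)) with hf
  have hsum : ∑ k : Fin (d ^ 2), sicL d k x * sicL d k y = ∑ k ∈ Finset.range (d ^ 2), f k := by
    rw [← Fin.sum_univ_eq_sum_range]
    exact Finset.sum_congr rfl fun k _ => by simp [sicL, hf]
  rw [hsum]
  have hrange : Finset.range (d ^ 2) = insert 0 (Finset.Ico 1 (d ^ 2)) := by
    ext a; simp [Finset.mem_range, Finset.mem_Ico]; omega
  rw [hrange, Finset.sum_insert (by simp)]
  by_cases hx0 : (x : ℕ) = 0
  · have hz : ∑ k ∈ Finset.Ico 1 (d ^ 2), f k = 0 := by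
      refine Finset.sum_eq_zero fun k hk => ?_
      simp only [Finset.mem_Ico] at hk
      simp only [hf]
      rw [if_neg (by omega : ¬ k = 0), if_pos (by omega : (x:ℕ) < k), zero_mul]
    rw [hz, add_zero]
    simp only [hf]
    by_cases hy0 : (y : ℕ) = 0
    · have hxy2 : x = y := Fin.ext (by omega)
      simp [sicCert, ← hxy2, hx0, hy0, Fin.val_eq_zero_iff.mp hx0]
    · have hxy2 : x ≠ y := fun h => hy0 (h ▸ hx0)
      simp [sicCert, hxy2, hx0, hy0, Fin.val_eq_zero_iff.mp hx0, mt Fin.val_eq_zero_iff.mpr hy0, Ne.symm (mt Fin.val_eq_zero_iff.mpr hy0)]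
  · -- x ≥ 1, so y ≥ 1
    have hx1 : 1 ≤ (x : ℕ) := by omega
    have hy0 : ¬ (y : ℕ) = 0 := by omega
    rw [← Finset.sum_Ico_consecutive f hx1 hxle]
    have hf0 : f 0 = 1 / (d:ℝ) * (1 / (d:ℝ)) := by simp only [hf]; simp [hx0, hy0]
    have hlow : ∑ k ∈ Finset.Ico 1 (x : ℕ), f k
        = ∑ k ∈ Finset.Icc 1 ((x : ℕ) - 1), (sicX d k / ((d ^ 2 : ℝ) - k)) ^ 2 := by
      rw [show Finset.Icc 1 ((x:ℕ) - 1) = Finset.Ico 1 (x:ℕ) from by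
        ext a; simp [Finset.mem_Icc, Finset.mem_Ico]; omega]
      refine Finset.sum_congr rfl fun k hk => ?_
      simp only [Finset.mem_Ico] at hk
      simp only [hf]
      rw [if_neg (by omega : ¬ k = 0), if_neg (by omega : ¬ (x:ℕ) < k),
        if_neg (by omega : ¬ (x:ℕ) = k), if_neg (by omega : ¬ k = 0),
        if_neg (by omega : ¬ (y:ℕ) < k), if_neg (by omega : ¬ (y:ℕ) = k)]
      ring
    rw [hf0, hlow, sum_tele d hd ((x:ℕ) - 1) (by omega)]
    have hcastx : (((x:ℕ) - 1 : ℕ) : ℝ) = ((x:ℕ) : ℝ) - 1 := by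
      rw [Nat.cast_sub hx1]; norm_num
    rw [hcastx]
    have hre : (d:ℝ) ^ 2 - (((x:ℕ):ℝ) - 1) = (d:ℝ) ^ 2 - ((x:ℕ):ℝ) + 1 := by ring
    rw [hre]
    have hxr : ((x:ℕ):ℝ) ≤ (d:ℝ)^2 := by exact_mod_cast hxle
    have hxr1 : (1:ℝ) ≤ ((x:ℕ):ℝ) := by exact_mod_cast hx1
    have hn : (0:ℝ) < (d:ℝ)^2 := by positivity
    have hnne : (d:ℝ)^2 ≠ 0 := ne_of_gt hn
    have hd1 : ((d:ℝ) + 1) ≠ 0 := by positivity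
    have hd0 : (d:ℝ) ≠ 0 := by positivity
    have hB1 : (d:ℝ)^2 - ((x:ℕ):ℝ) + 1 ≠ 0 := by nlinarith
    by_cases hxn : (x : ℕ) = d ^ 2
    · have hyn : (y : ℕ) = d ^ 2 := by omega
      have hxy2 : x = y := Fin.ext (by omega)
      have hempty : Finset.Ico (x:ℕ) (d ^ 2) = ∅ := by rw [hxn]; simp
      rw [hempty, Finset.sum_empty, add_zero]
      have hcert : sicCert d x y = 1 / (d:ℝ) := by
        simp only [sicCert, of_apply]; rw [if_pos hxy2, if_neg hx0]
      rw [hcert]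
      have hxe : ((x:ℕ):ℝ) = (d:ℝ)^2 := by exact_mod_cast hxn
      rw [hxe]
      field_simp
      ring
    · have hxn' : (x : ℕ) < d ^ 2 := lt_of_le_of_ne hxle hxn
      have hxrlt : ((x:ℕ):ℝ) < (d:ℝ)^2 := by exact_mod_cast hxn'
      have hAx : (d:ℝ)^2 - ((x:ℕ):ℝ) ≠ 0 := by nlinarith
      have hhigh : ∑ k ∈ Finset.Ico (x:ℕ) (d ^ 2), f k = f (x:ℕ) := by
        refine Finset.sum_eq_single_of_mem _
          (Finset.mem_Ico.mpr ⟨le_refl _, hxn'⟩) fun b hb hbx => ?_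
        simp only [Finset.mem_Ico] at hb
        simp only [hf]
        rw [if_neg (by omega : ¬ b = 0), if_pos (by omega : (x:ℕ) < b), zero_mul]
      rw [hhigh]
      have hsq := sicX_sq d (x:ℕ) hxle
      by_cases hxy2 : x = y
      · have hfx : f (x:ℕ) = sicX d (x:ℕ) ^ 2 := by
          simp only [hf]
          have hyx : (y:ℕ) = (x:ℕ) := by rw [hxy2]
          simp [hx0, hyx]
          ring
        rw [hfx, hsq]
        have hcert : sicCert d x y = 1 / (d:ℝ) := by
          simp only [sicCert, of_apply]; rw [if_pos hxy2, if_neg hx0]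
        rw [hcert]
        push_cast
        field_simp
        ring
      · have hxy3 : (x:ℕ) < (y:ℕ) := lt_of_le_of_ne hxy (fun h => hxy2 (Fin.ext h))
        have hfx : f (x:ℕ) = -(sicX d (x:ℕ) ^ 2) / ((d ^ 2 : ℝ) - (x:ℕ)) := by
          simp only [hf]
          have h1 : ¬ y < x := by rw [Fin.lt_def]; omega
          simp [hx0, h1, (by omega : ¬ (y:ℕ) < (x:ℕ))]
          rw [if_neg (by omega : ¬ (y:ℕ) = (x:ℕ))]
          ring
        rw [hfx, hsq]
        have hcert : sicCert d x y = 1 / ((d:ℝ) * ((d:ℝ) + 1)) := by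
          simp only [sicCert, of_apply]
          rw [if_neg hxy2, if_neg (by simp [hx0, hy0] : ¬((x:ℕ) = 0 ∨ (y:ℕ) = 0))]
        rw [hcert]
        push_cast
        field_simp
        ring

/-- the matrix `L` factors the SIC certificate: `Lᵀ L = T₁`. -/
theorem stmt12 (d : ℕ) (hd : 2 ≤ d) : (sicL d)ᵀ * sicL d = sicCert d := by
  have hsymm : ∀ i j : Fin (d ^ 2 + 1), sicCert d i j = sicCert d j i := by
    intro i j
    by_cases h : i = j
    · simp [h]
    · simp only [sicCert, of_apply, if_neg h, if_neg (Ne.symm h)]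
      by_cases h0 : (i:ℕ) = 0 ∨ (j:ℕ) = 0
      · rw [if_pos h0, if_pos (or_comm.mp h0)]
      · rw [if_neg h0, if_neg (fun hc => h0 (or_comm.mp hc))]
  ext i j
  rw [mul_apply]
  simp only [transpose_apply]
  rcases le_total (i : ℕ) (j : ℕ) with h | h
  · exact sic_entry d hd i j h
  · rw [hsymm i j, ← sic_entry d hd j i h]
    exact Finset.sum_congr rfl fun k _ => mul_comm _ _
end

section
/- Let d ∈ ℕ, d ≥ 2, and let T₁ be the (d²+1)×(d²+1) matrix of the SIC certificate. Then T₁ is positive semidefinite and rank(T₁) = d². -/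
open Matrix

namespace SicAux

/-- `s = 1/√(d+1)`. -/
noncomputable def sS (d : ℕ) : ℝ := Real.sqrt (((d : ℝ) + 1)⁻¹)

/-- `t = (1-s)/d²`. -/
noncomputable def sT (d : ℕ) : ℝ := (1 - sS d) / (d : ℝ) ^ 2

/-- Gram factor of `sicCert`: columns `c₀ = (1/d)𝟙`, `c_j = s·e_{j-1} + t·𝟙` for `j ≥ 1`. -/
noncomputable def sB (d : ℕ) : Matrix (Fin (d ^ 2)) (Fin (d ^ 2 + 1)) ℝ :=
  Matrix.of fun i j =>
    (if (i : ℕ) = (j : ℕ) - 1 then (if (j : ℕ) = 0 then 0 else sS d) else 0)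
      + (if (j : ℕ) = 0 then 1 / (d : ℝ) else sT d)

noncomputable def cc (d : ℕ) : ℝ :=
  1 / (d : ℝ) ^ 2 + 2 * sS d * sT d + (d : ℝ) ^ 2 * sT d ^ 2

/-- `sB * sBᵀ = s²·I + cc·J`. -/
noncomputable def sC (d : ℕ) : Matrix (Fin (d ^ 2)) (Fin (d ^ 2)) ℝ :=
  Matrix.of fun i k => (if i = k then sS d ^ 2 else 0) + cc d

/-- Explicit right inverse of `sC`. -/
noncomputable def sD (d : ℕ) : Matrix (Fin (d ^ 2)) (Fin (d ^ 2)) ℝ :=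
  Matrix.of fun i k => (if i = k then (sS d ^ 2)⁻¹ else 0) + (-(cc d) / (2 * sS d ^ 2))

lemma sum_ind {n : ℕ} (p : Fin n) (v : ℝ) :
    ∑ i : Fin n, (if i = p then v else 0) = v := by simp

lemma sum_aux {n : ℕ} (p q : Fin n) (a b t u : ℝ) :
    ∑ i : Fin n, ((if i = p then a else 0) + t) * ((if i = q then b else 0) + u)
      = (if p = q then a * b else 0) + a * u + b * t + n * t * u := by
  have key : ∀ i : Fin n,
      ((if i = p then a else 0) + t) * ((if i = q then b else 0) + u)
      = (if i = p then (if i = q then a * b else 0) else 0)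
        + ((if i = p then a * u else 0) + ((if i = q then b * t else 0) + t * u)) := by
    intro i
    split_ifs <;> ring
  rw [Finset.sum_congr rfl fun i _ => key i]
  rw [Finset.sum_add_distrib, Finset.sum_add_distrib, Finset.sum_add_distrib]
  rw [sum_ind p (a*u), sum_ind q (b*t)]
  simp only [Finset.sum_const, Finset.card_univ, Fintype.card_fin, nsmul_eq_mul]
  by_cases hpq : p = q
  · subst hpq
    have h3 : ∀ i : Fin n, (if i = p then (if i = p then a*b else 0) else 0)
        = (if i = p then a*b else 0) := by
      intro i; split_ifs <;> simp_all
    rw [Finset.sum_congr rfl fun i _ => h3 i, sum_ind p (a*b)]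
    simp; ring
  · have h3 : ∀ i : Fin n, (if i = p then (if i = q then a*b else 0) else 0) = 0 := by
      intro i; split_ifs with h1 h2
      · exact absurd (h1 ▸ h2) hpq
      · rfl
      · rfl
    rw [Finset.sum_congr rfl fun i _ => h3 i]
    simp [hpq]; ring

lemma hs2 (d : ℕ) : sS d ^ 2 = ((d : ℝ) + 1)⁻¹ :=
  Real.sq_sqrt (by positivity)

lemma sS_pos (d : ℕ) : 0 < sS d :=
  Real.sqrt_pos.mpr (by positivity)

lemma gram (d : ℕ) (hd : 2 ≤ d) : (sB d)ᵀ * sB d = sicCert d := by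
  have hd0 : (0:ℝ) < (d:ℝ) := by exact_mod_cast (by omega : 0 < d)
  have hdn : 0 < d ^ 2 := by positivity
  have hs : sS d ^ 2 = ((d : ℝ) + 1)⁻¹ := hs2 d
  ext j k
  have hj1 : (j : ℕ) - 1 < d ^ 2 := by have := j.isLt; omega
  have hk1 : (k : ℕ) - 1 < d ^ 2 := by have := k.isLt; omega
  set pj : Fin (d ^ 2) := ⟨(j : ℕ) - 1, hj1⟩
  set pk : Fin (d ^ 2) := ⟨(k : ℕ) - 1, hk1⟩
  have ej : ∀ i : Fin (d ^ 2), ((i : ℕ) = (j : ℕ) - 1) = (i = pj) :=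
    fun i => propext ⟨fun h => Fin.ext h, fun h => congrArg Fin.val h⟩
  have ek : ∀ i : Fin (d ^ 2), ((i : ℕ) = (k : ℕ) - 1) = (i = pk) :=
    fun i => propext ⟨fun h => Fin.ext h, fun h => congrArg Fin.val h⟩
  rw [mul_apply]
  simp only [transpose_apply, sB, of_apply, ej, ek]
  rw [sum_aux pj pk]
  have hpjk : (pj = pk) ↔ ((j:ℕ) - 1 = (k:ℕ) - 1) := Fin.ext_iff
  have hjk : (j = k) ↔ ((j:ℕ) = (k:ℕ)) := Fin.ext_iff
  simp only [sicCert, of_apply]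
  by_cases hj : (j : ℕ) = 0 <;> by_cases hk : (k : ℕ) = 0
  · -- both indices are 0, so `j = k`
    have : j = k := hjk.mpr (hj.trans hk.symm)
    simp only [if_pos hj, if_pos hk, if_pos this, hpjk]
    push_cast
    field_simp
    split_ifs <;> ring
  · have : ¬ j = k := fun h => hk (by rw [← hjk.mp h]; exact hj)
    simp only [if_pos hj, if_neg hk, if_neg this, if_pos (Or.inl hj), hpjk, sT]
    split_ifs <;> push_cast <;> field_simp <;> ring
  · have : ¬ j = k := fun h => hj (by rw [hjk.mp h]; exact hk)
    simp only [if_neg hj, if_pos hk, if_neg this, if_pos (Or.inr hk), hpjk, sT]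
    split_ifs <;> push_cast <;> field_simp <;> ring
  · by_cases hjk' : j = k
    · have : (j:ℕ) - 1 = (k:ℕ) - 1 := by rw [hjk.mp hjk']
      simp only [if_neg hj, if_neg hk, if_pos hjk', if_pos (hpjk.mpr this), sT]
      have hs' : sS d ^ 2 * ((d:ℝ)+1) = 1 := by rw [hs]; field_simp
      push_cast
      field_simp
      linear_combination ((d:ℝ) - 1) * hs'
    · have : ¬ ((j:ℕ) - 1 = (k:ℕ) - 1) := by
        have h1 : ¬ (j:ℕ) = (k:ℕ) := fun h => hjk' (hjk.mpr h)
        omega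
      simp only [if_neg hj, if_neg hk, if_neg hjk', if_neg (hpjk.not.mpr this), sT,
        if_neg (by tauto : ¬((j:ℕ) = 0 ∨ (k:ℕ) = 0))]
      have hs' : sS d ^ 2 * ((d:ℝ)+1) = 1 := by rw [hs]; field_simp
      push_cast
      field_simp
      linear_combination (-1 : ℝ) * hs'

lemma key_cc (d : ℕ) (hd : 2 ≤ d) : sS d ^ 2 + (d : ℝ) ^ 2 * cc d = 2 := by
  have hd0 : (0:ℝ) < (d:ℝ) := by exact_mod_cast (by omega : 0 < d)
  unfold cc sT
  field_simp
  ring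

lemma bbt (d : ℕ) (hd : 2 ≤ d) : sB d * (sB d)ᵀ = sC d := by
  ext i k
  rw [mul_apply]
  simp only [transpose_apply, sB, of_apply]
  rw [Fin.sum_univ_succ]
  simp only [Fin.val_zero, Fin.val_succ, Nat.add_sub_cancel, Nat.succ_ne_zero,
    if_pos rfl, if_neg (Nat.succ_ne_zero _), ite_self, Nat.zero_sub, ite_self]
  have ei : ∀ j : Fin (d ^ 2), ((i : ℕ) = (j : ℕ)) = (j = i) :=
    fun j => propext ⟨fun h => Fin.ext h.symm, fun h => (congrArg Fin.val h).symm⟩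
  have ek : ∀ j : Fin (d ^ 2), ((k : ℕ) = (j : ℕ)) = (j = k) :=
    fun j => propext ⟨fun h => Fin.ext h.symm, fun h => (congrArg Fin.val h).symm⟩
  simp only [ei, ek]
  rw [sum_aux i k]
  simp only [sC, of_apply, cc]
  split_ifs <;> first
    | contradiction
    | (push_cast; ring)

lemma cd (d : ℕ) (hd : 2 ≤ d) : sC d * sD d = 1 := by
  have hs0 : sS d ^ 2 ≠ 0 := pow_ne_zero _ (sS_pos d).ne'
  have hkey := key_cc d hd
  ext i k
  rw [mul_apply]
  simp only [sC, sD, of_apply]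
  have ei : ∀ j : Fin (d ^ 2), (i = j) = (j = i) :=
    fun j => propext ⟨fun h => h.symm, fun h => h.symm⟩
  simp only [ei]
  rw [sum_aux i k]
  rw [one_apply]
  split_ifs with h
  · push_cast
    field_simp [(sS_pos d).ne']
    linear_combination (-cc d) * hkey
  · push_cast
    field_simp [(sS_pos d).ne']
    linear_combination (-cc d) * hkey

end SicAux

/-- the SIC certificate `T₁` is positive semidefinite of rank `d²`. -/
theorem stmt13 (d : ℕ) (hd : 2 ≤ d) :
    (sicCert d).PosSemidef ∧ (sicCert d).rank = d ^ 2 := by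
  constructor
  · have h := Matrix.posSemidef_conjTranspose_mul_self (SicAux.sB d)
    rwa [Matrix.conjTranspose_eq_transpose_of_trivial, SicAux.gram d hd] at h
  · rw [← SicAux.gram d hd, Matrix.rank_transpose_mul_self,
      ← Matrix.rank_self_mul_transpose, SicAux.bbt d hd]
    have : Invertible (SicAux.sC d) :=
      invertibleOfRightInverse _ _ (SicAux.cd d hd)
    rw [Matrix.rank_of_isUnit _ (isUnit_of_invertible _), Fintype.card_fin]
end

section
/- Let d ∈ ℕ, d ≥ 2, and let T₁ be the (d(d+1)+1)×(d(d+1)+1) matrix of the MUB certificate. Define u₀ ∈ ℝ^{d(d+1)+1} by u₀ = (1, 1/d, …, 1/d), and for each x ∈ [d+1] and k ∈ {1,…,d−1} define u_{x,k} ∈ ℝ^{d(d+1)+1} to be the vector whose 0-coordinate is 0, whose x-th block of d coordinates equals v_k, and which is zero elsewhere, where v_k ∈ ℝ^d has its first k−1 coordinates equal to 0, coordinate k equal to 1, and all remaining coordinates equal to −1/(d−k). Then the vectors u₀ and u_{x,k} (x ∈ [d+1], k ∈ {1,…,d−1}) are pairwise orthogonal eigenvectors of T₁ with T₁u₀ =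 ((2d+1)/d)·u₀ and T₁u_{x,k} = (1/d)·u_{x,k}. -/
open Matrix

/-- The index set `{0} ∪ ([d+1] × [d])` for the MUB certificate;
`none` is the distinguished index `0`. -/
abbrev MubIdx (d : ℕ) := Option (Fin (d + 1) × Fin d)

/-- The MUB certificate `T₁`: the `(d(d+1)+1)×(d(d+1)+1)` real symmetric matrix with
`(T₁)_{0,0} = 1`, `(T₁)_{0,(x,i)} = (T₁)_{(x,i),0} = 1/d`, `(T₁)_{(x,i),(x,i)} = 1/d`,
`(T₁)_{(x,i),(x,j)} = 0` for `i ≠ j`, and `(T₁)_{(x,i),(y,j)} = 1/d²` whenever `x ≠ y`. -/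
noncomputable def mubCert (d : ℕ) : Matrix (MubIdx d) (MubIdx d) ℝ :=
  Matrix.of fun a b =>
    match a, b with
    | none, none => 1
    | none, some _ => 1 / d
    | some _, none => 1 / d
    | some (x, i), some (y, j) =>
        if x = y then (if i = j then 1 / d else 0) else 1 / (d : ℝ) ^ 2

/-- The vector `v_k ∈ ℝ^d` (coordinates numbered `1,…,d`, so the `Fin d` index `i`
corresponds to coordinate `i+1`): its first `k−1` coordinates are `0`, coordinate `k` is `1`,
and the remaining coordinates are `−1/(d−k)`. -/
noncomputable def mubV (d k : ℕ) : Fin d → ℝ :=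
  fun i => if (i : ℕ) + 1 < k then 0 else if (i : ℕ) + 1 = k then 1 else -1 / ((d : ℝ) - k)

/-- The vector `u₀ = (1, 1/d, …, 1/d)`. -/
noncomputable def mubU0 (d : ℕ) : MubIdx d → ℝ :=
  fun a => match a with
  | none => 1
  | some _ => 1 / d

/-- The vector `u_{x,k}`: its `0`-coordinate is `0`, its `x`-th block of `d` coordinates is
`v_k`, and it vanishes elsewhere. -/
noncomputable def mubU (d : ℕ) (x : Fin (d + 1)) (k : ℕ) : MubIdx d → ℝ :=
  fun a => match a with
  | none => 0
  | some (y, i) => if y = x then mubV d k i else 0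

lemma sumV (d k : ℕ) (h1 : 1 ≤ k) (h2 : k < d) : ∑ i : Fin d, mubV d k i = 0 := by
  have hdk : (d : ℝ) - k ≠ 0 := by
    have : (k : ℝ) < d := by exact_mod_cast h2
    linarith
  have : ∑ i : Fin d, mubV d k i
      = ∑ n ∈ Finset.range d, (if n + 1 < k then 0 else if n + 1 = k then 1 else -1 / ((d : ℝ) - k)) := by
    rw [← Fin.sum_univ_eq_sum_range (fun n => if n + 1 < k then (0:ℝ) else if n + 1 = k then 1 else -1 / ((d : ℝ) - k))]
    rfl
  rw [this, Finset.range_eq_Ico, ← Finset.sum_Ico_consecutive _ (Nat.zero_le k) h2.le]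
  have hA : ∑ n ∈ Finset.Ico 0 k, (if n + 1 < k then (0:ℝ) else if n + 1 = k then 1 else -1 / ((d : ℝ) - k))
      = 1 := by
    have : ∀ n ∈ Finset.Ico 0 k,
        (if n + 1 < k then (0:ℝ) else if n + 1 = k then 1 else -1 / ((d : ℝ) - k))
        = if n = k - 1 then 1 else 0 := by
      intro n hn
      simp only [Finset.mem_Ico] at hn
      split_ifs <;> first | rfl | (exfalso; omega)
    rw [Finset.sum_congr rfl this, Finset.sum_ite_eq' (Finset.Ico 0 k) (k-1)]
    simp only [Finset.mem_Ico]
    rw [if_pos ⟨Nat.zero_le _, by omega⟩]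
  have hB : ∑ n ∈ Finset.Ico k d, (if n + 1 < k then (0:ℝ) else if n + 1 = k then 1 else -1 / ((d : ℝ) - k))
      = ((d : ℝ) - k) * (-1 / ((d : ℝ) - k)) := by
    have : ∀ n ∈ Finset.Ico k d,
        (if n + 1 < k then (0:ℝ) else if n + 1 = k then 1 else -1 / ((d : ℝ) - k))
        = -1 / ((d : ℝ) - k) := by
      intro n hn
      simp only [Finset.mem_Ico] at hn
      split_ifs <;> first | rfl | (exfalso; omega)
    rw [Finset.sum_congr rfl this, Finset.sum_const, Nat.card_Ico, nsmul_eq_mul,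
      Nat.cast_sub h2.le]
  rw [hA, hB]
  field_simp
  ring

lemma prodV (d k l : ℕ) (hkl : k < l) (i : Fin d) :
    mubV d k i * mubV d l i = (-1 / ((d : ℝ) - k)) * mubV d l i := by
  unfold mubV
  have := i.2
  split_ifs <;> first | (exfalso; omega) | ring

lemma prodSumV (d k l : ℕ) (hk : 1 ≤ k) (hkd : k < d) (hl : 1 ≤ l) (hld : l < d)
    (hne : k ≠ l) : ∑ i : Fin d, mubV d k i * mubV d l i = 0 := by
  rcases hne.lt_or_gt with h | h
  · rw [Finset.sum_congr rfl (fun i _ => prodV d k l h i), ← Finset.mul_sum,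
      sumV d l hl hld, mul_zero]
  · rw [Finset.sum_congr rfl (fun i _ => mul_comm (mubV d k i) (mubV d l i)),
      Finset.sum_congr rfl (fun i _ => prodV d l k h i), ← Finset.mul_sum,
      sumV d k hk hkd, mul_zero]

lemma optSum (d : ℕ) (f : MubIdx d → ℝ) :
    ∑ a, f a = f none + ∑ y : Fin (d+1), ∑ i : Fin d, f (some (y, i)) := by
  rw [Fintype.sum_option, Fintype.sum_prod_type]

/-- the vectors `u₀` and `u_{x,k}` (`x ∈ [d+1]`, `1 ≤ k ≤ d−1`) are
pairwise orthogonal eigenvectors of the MUB certificate `T₁`, with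
`T₁u₀ = ((2d+1)/d)·u₀` and `T₁u_{x,k} = (1/d)·u_{x,k}`. -/
theorem stmt15 (d : ℕ) (hd : 2 ≤ d) :
    (∀ (x : Fin (d + 1)) (k : ℕ), 1 ≤ k → k ≤ d - 1 →
      dotProduct (mubU0 d) (mubU d x k) = 0) ∧
    (∀ (x y : Fin (d + 1)) (k l : ℕ), 1 ≤ k → k ≤ d - 1 → 1 ≤ l → l ≤ d - 1 →
      (x, k) ≠ (y, l) → dotProduct (mubU d x k) (mubU d y l) = 0) ∧
    mubCert d *ᵥ mubU0 d = ((2 * (d : ℝ) + 1) / d) • mubU0 d ∧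
    (∀ (x : Fin (d + 1)) (k : ℕ), 1 ≤ k → k ≤ d - 1 →
      mubCert d *ᵥ mubU d x k = (1 / (d : ℝ)) • mubU d x k) := by
  have hd0 : (d : ℝ) ≠ 0 := by positivity
  refine ⟨?_, ?_, ?_, ?_⟩
  · -- u₀ ⟂ u_{x,k}
    intro x k hk1 hk2
    have hkd : k < d := by omega
    rw [dotProduct, optSum]
    have h1 : ∀ y : Fin (d+1), ∑ i : Fin d,
        mubU0 d (some (y, i)) * mubU d x k (some (y, i))
        = if y = x then (1/(d:ℝ)) * ∑ i : Fin d, mubV d k i else 0 := by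
      intro y
      by_cases h : y = x <;> simp [mubU0, mubU, h, Finset.mul_sum]
    rw [Finset.sum_congr rfl (fun y _ => h1 y), Finset.sum_ite_eq' Finset.univ x]
    simp [mubU0, mubU, sumV d k hk1 hkd]
  · -- u_{x,k} ⟂ u_{y,l}
    intro x y k l hk1 hk2 hl1 hl2 hne
    have hkd : k < d := by omega
    have hld : l < d := by omega
    rw [dotProduct, optSum]
    by_cases hxy : x = y
    · subst hxy
      have hkl : k ≠ l := by
        intro h; exact hne (by rw [h])
      have h1 : ∀ z : Fin (d+1), ∑ i : Fin d,
          mubU d x k (some (z, i)) * mubU d x l (some (z, i))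
          = if z = x then ∑ i : Fin d, mubV d k i * mubV d l i else 0 := by
        intro z
        by_cases h : z = x <;> simp [mubU, h]
      rw [Finset.sum_congr rfl (fun z _ => h1 z), Finset.sum_ite_eq' Finset.univ x]
      simp [mubU, prodSumV d k l hk1 hkd hl1 hld hkl]
    · have h1 : ∀ z : Fin (d+1), ∑ i : Fin d,
          mubU d x k (some (z, i)) * mubU d y l (some (z, i)) = 0 := by
        intro z
        refine Finset.sum_eq_zero fun i _ => ?_
        simp only [mubU]
        by_cases h : z = x
        · rw [if_pos h, if_neg (fun h2 => hxy (h.symm.trans h2)), mul_zero]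
        · rw [if_neg h, zero_mul]
      rw [Finset.sum_congr rfl (fun z _ => h1 z)]
      simp [mubU]
  · -- T₁ u₀ = ((2d+1)/d) u₀
    funext a
    rw [mulVec, dotProduct, optSum]
    cases a with
    | none =>
      have h1 : ∀ y : Fin (d+1), ∑ i : Fin d,
          mubCert d none (some (y, i)) * mubU0 d (some (y, i))
          = (d : ℝ) * (1/(d:ℝ) * (1/(d:ℝ))) := by
        intro y
        simp [mubCert, mubU0, Finset.sum_const, Finset.card_univ]
      rw [Finset.sum_congr rfl (fun y _ => h1 y), Finset.sum_const, Finset.card_univ]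
      simp only [mubCert, mubU0, Matrix.of_apply, Pi.smul_apply, smul_eq_mul,
        Fintype.card_fin, nsmul_eq_mul, Nat.cast_add, Nat.cast_one]
      field_simp
      ring
    | some p =>
      obtain ⟨x, i⟩ := p
      have h1 : ∀ y : Fin (d+1), ∑ j : Fin d,
          mubCert d (some (x, i)) (some (y, j)) * mubU0 d (some (y, j))
          = 1/(d:ℝ) * (1/(d:ℝ)) := by
        intro y
        by_cases h : x = y
        · simp only [mubCert, mubU0, Matrix.of_apply, if_pos h, ite_mul, zero_mul]
          rw [Finset.sum_ite_eq Finset.univ i]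
          simp
        · simp only [mubCert, mubU0, Matrix.of_apply, if_neg h]
          rw [Finset.sum_const, Finset.card_univ, Fintype.card_fin, nsmul_eq_mul]
          field_simp
      rw [Finset.sum_congr rfl (fun y _ => h1 y), Finset.sum_const, Finset.card_univ]
      simp only [mubCert, mubU0, Matrix.of_apply, Pi.smul_apply, smul_eq_mul,
        Fintype.card_fin, nsmul_eq_mul, Nat.cast_add, Nat.cast_one]
      field_simp
      ring
  · -- T₁ u_{x,k} = (1/d) u_{x,k}
    intro x k hk1 hk2
    have hkd : k < d := by omega
    have hsum := sumV d k hk1 hkd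
    funext a
    rw [mulVec, dotProduct, optSum]
    cases a with
    | none =>
      have h1 : ∀ y : Fin (d+1), ∑ i : Fin d,
          mubCert d none (some (y, i)) * mubU d x k (some (y, i))
          = if y = x then (1/(d:ℝ)) * ∑ i : Fin d, mubV d k i else 0 := by
        intro y
        by_cases h : y = x <;> simp [mubCert, mubU, h, Finset.mul_sum]
      rw [Finset.sum_congr rfl (fun y _ => h1 y), Finset.sum_ite_eq' Finset.univ x]
      simp [mubCert, mubU, hsum]
    | some p =>
      obtain ⟨y, i⟩ := p
      have h1 : ∀ z : Fin (d+1), ∑ j : Fin d,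
          mubCert d (some (y, i)) (some (z, j)) * mubU d x k (some (z, j))
          = if z = x then (if y = z then (1/(d:ℝ)) * mubV d k i else 0) else 0 := by
        intro z
        by_cases hzx : z = x
        · simp only [mubCert, mubU, Matrix.of_apply, if_pos hzx]
          by_cases hyz : y = z
          · simp only [if_pos hyz, ite_mul, zero_mul]
            rw [Finset.sum_ite_eq Finset.univ i]
            simp
          · simp only [if_neg hyz]
            rw [← Finset.mul_sum, hsum, mul_zero]
        · simp only [mubCert, mubU, Matrix.of_apply, if_neg hzx, mul_zero,
            Finset.sum_const_zero]
      rw [Finset.sum_congr rfl (fun z _ => h1 z), Finset.sum_ite_eq' Finset.univ x]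
      by_cases hxy : y = x <;>
        simp [mubCert, mubU, hxy]
end

section
/- Let d ∈ ℕ, d ≥ 2, and let T₁ be the (d(d+1)+1)×(d(d+1)+1) matrix of the MUB certificate. Then T₁ is positive semidefinite and rank(T₁) = d². -/
open Matrix

namespace Stmt16Aux

variable (e : ℕ)

/-- ambient dimension index -/
abbrev N (e : ℕ) := MubIdx (e + 2)
/-- small index of cardinality (e+2)^2 -/
abbrev K (e : ℕ) := Option (Fin (e + 3) × Fin (e + 1))

noncomputable def matA : Matrix (N e) (N e) ℝ :=
  Matrix.of fun a b =>
    match a, b with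
    | none, none => 1
    | none, some _ => 1 / ((e : ℝ) + 2)
    | some _, none => 0
    | some (y, j), some (x, i) =>
        if y = x then (Real.sqrt ((e : ℝ) + 2))⁻¹ * ((if j = i then 1 else 0) - 1 / ((e : ℝ) + 2)) else 0

lemma matA_fact : (matA e)ᵀ * matA e = mubCert (e + 2) := by
  have h2 : (0:ℝ) < (e : ℝ) + 2 := by positivity
  have hs : (Real.sqrt ((e : ℝ) + 2))⁻¹ * (Real.sqrt ((e : ℝ) + 2))⁻¹ = 1 / ((e : ℝ) + 2) := by
    rw [← mul_inv, Real.mul_self_sqrt h2.le, one_div]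
  ext a b
  rcases a with _ | ⟨x, i⟩ <;> rcases b with _ | ⟨y, j⟩ <;>
    simp only [mul_apply, transpose_apply, Fintype.sum_option, Fintype.sum_prod_type,
      matA, mubCert, of_apply] <;>
    push_cast
  · simp
  · simp [h2.ne']
  · simp [h2.ne']
  · set s := (Real.sqrt ((e : ℝ) + 2))⁻¹ with hsdef
    rcases eq_or_ne x y with rfl | hxy
    · simp only [if_pos rfl]
      have key : ∀ z : Fin (e+3), ∑ k : Fin (e+2),
          (if z = x then s * ((if k = i then 1 else 0) - 1/((e:ℝ)+2)) else 0) *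
          (if z = x then s * ((if k = j then 1 else 0) - 1/((e:ℝ)+2)) else 0)
          = if z = x then (s*s) * ((if i = j then 1 else 0) - 1/((e:ℝ)+2)) else 0 := by
        intro z
        rcases eq_or_ne z x with rfl | hz
        · simp only [eq_self_iff_true, ite_true]
          have expand : ∀ k : Fin (e+2),
              (s * ((if k = i then 1 else 0) - 1/((e:ℝ)+2))) * (s * ((if k = j then 1 else 0) - 1/((e:ℝ)+2)))
              = (s*s) * ((if k = i then (1:ℝ) else 0) * (if k = j then 1 else 0))
                - (s*s) * ((if k = i then 1 else 0) * (1/((e:ℝ)+2)))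
                - (s*s) * ((if k = j then 1 else 0) * (1/((e:ℝ)+2)))
                + (s*s) * (1/((e:ℝ)+2))^2 := by intro k; ring
          simp only [expand]
          rw [Finset.sum_add_distrib, Finset.sum_sub_distrib, Finset.sum_sub_distrib,
            ← Finset.mul_sum, ← Finset.mul_sum, ← Finset.mul_sum, ← Finset.mul_sum]
          have h1 : ∑ k : Fin (e+2), (if k = i then (1:ℝ) else 0) * (if k = j then 1 else 0)
              = if i = j then 1 else 0 := by
            simp only [ite_mul, one_mul, zero_mul]
            rw [Finset.sum_ite_eq' Finset.univ i (fun k => if k = j then (1:ℝ) else 0)]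
            simp
          have h2' : ∑ k : Fin (e+2), (if k = i then (1:ℝ) else 0) * (1/((e:ℝ)+2))
              = 1/((e:ℝ)+2) := by
            simp only [ite_mul, one_mul, zero_mul]
            rw [Finset.sum_ite_eq' Finset.univ i (fun _ => 1/((e:ℝ)+2))]; simp
          have h3' : ∑ k : Fin (e+2), (if k = j then (1:ℝ) else 0) * (1/((e:ℝ)+2))
              = 1/((e:ℝ)+2) := by
            simp only [ite_mul, one_mul, zero_mul]
            rw [Finset.sum_ite_eq' Finset.univ j (fun _ => 1/((e:ℝ)+2))]; simp
          have h4' : ∑ _k : Fin (e+2), (1/((e:ℝ)+2))^2 = ((e:ℝ)+2) * (1/((e:ℝ)+2))^2 := by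
            rw [Finset.sum_const, Finset.card_univ, Fintype.card_fin, nsmul_eq_mul]
            push_cast; ring
          have hD : ((e:ℝ)+2) * (1/((e:ℝ)+2))^2 = 1/((e:ℝ)+2) := by
            field_simp
          rw [h1, h2', h3', h4', hD]
          ring
        · simp [hz]
      rw [Finset.sum_congr rfl (fun z _ => key z),
        Finset.sum_ite_eq' Finset.univ x (fun _ => (s*s) * ((if i = j then 1 else 0) - 1/((e:ℝ)+2)))]
      simp only [Finset.mem_univ, if_pos, hs]
      rcases eq_or_ne i j with rfl | hij
      · simp only [eq_self_iff_true, ite_true]; field_simp; ring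
      · simp only [if_neg hij]; field_simp; ring
    · have key : ∀ z : Fin (e+3), ∀ k : Fin (e+2),
          (if z = x then s * ((if k = i then 1 else 0) - 1/((e:ℝ)+2)) else 0) *
          (if z = y then s * ((if k = j then 1 else 0) - 1/((e:ℝ)+2)) else 0) = 0 := by
        intro z k
        rcases eq_or_ne z x with rfl | hz
        · rw [if_neg hxy, mul_zero]
        · rw [if_neg hz, zero_mul]
      simp only [key, Finset.sum_const_zero, add_zero, if_neg hxy]
      field_simp


def matZ : Matrix (N e) (Fin (e + 3)) ℝ :=
  Matrix.of fun a x =>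
    match a with
    | none => -1
    | some (y, _) => if y = x then 1 else 0

lemma mub_mul_matZ : mubCert (e + 2) * matZ e = 0 := by
  have h2 : ((e : ℝ) + 2) ≠ 0 := by positivity
  ext a x
  rcases a with _ | ⟨z, i⟩ <;>
    simp only [mul_apply, Fintype.sum_option, Fintype.sum_prod_type,
      matZ, mubCert, of_apply, Matrix.zero_apply] <;> push_cast
  · -- row none
    simp only [mul_ite, mul_one, mul_zero, ite_mul, one_mul, zero_mul]
    rw [Finset.sum_comm]
    simp [Finset.sum_ite_eq', Finset.sum_const, h2]
  · rcases eq_or_ne z x with rfl | hz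
    · simp only [mul_ite, mul_one, mul_zero]
      rw [Finset.sum_comm]
      simp [Finset.sum_ite_eq', Finset.sum_ite_eq]
    · simp only [mul_ite, mul_one, mul_zero]
      rw [Finset.sum_comm]
      simp [hz, Finset.sum_ite_eq', Finset.sum_ite_eq, Finset.sum_const]
      field_simp
      ring

def matY' : Matrix (Fin (e + 3)) (N e) ℝ :=
  Matrix.of fun x a => if a = some (x, 0) then 1 else 0

lemma matY'_mul_matZ : matY' e * matZ e = 1 := by
  ext x y
  simp only [mul_apply, Fintype.sum_option, Fintype.sum_prod_type, matY', matZ, of_apply]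
  simp only [Matrix.one_apply]
  rcases eq_or_ne x y with rfl | h
  · simp [Finset.sum_ite_eq', Prod.ext_iff, Finset.filter_eq']
  · simp [Finset.sum_ite_eq', Prod.ext_iff, h, Ne.symm h]

/-- entries of a difference-vector basis of the sum-zero space -/
def ee (j : Fin (e + 2)) (i : Fin (e + 1)) : ℝ :=
  (if j = i.castSucc then 1 else 0) - (if j = Fin.last (e + 1) then 1 else 0)

lemma sum_ee (i : Fin (e + 1)) : ∑ j : Fin (e + 2), ee e j i = 0 := by
  simp [ee, Finset.sum_sub_distrib, Finset.sum_ite_eq']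

lemma sum_ee_mul (i i' : Fin (e + 1)) :
    ∑ j : Fin (e + 2), ee e j i * ee e j i' = (if i = i' then 1 else 0) + 1 := by
  have hne : (i.castSucc : Fin (e + 2)) ≠ Fin.last (e + 1) := (Fin.castSucc_lt_last i).ne
  have hne' : (i'.castSucc : Fin (e + 2)) ≠ Fin.last (e + 1) := (Fin.castSucc_lt_last i').ne
  have expand : ∀ j : Fin (e + 2), ee e j i * ee e j i' =
      ((if j = i.castSucc then 1 else 0) * if j = i'.castSucc then 1 else 0)
      - ((if j = i.castSucc then 1 else 0) * if j = Fin.last (e + 1) then 1 else 0)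
      - ((if j = Fin.last (e + 1) then 1 else 0) * if j = i'.castSucc then 1 else 0)
      + ((if j = Fin.last (e + 1) then (1:ℝ) else 0) * if j = Fin.last (e + 1) then 1 else 0) := by
    intro j; simp only [ee]; ring
  simp only [expand]
  rw [Finset.sum_add_distrib, Finset.sum_sub_distrib, Finset.sum_sub_distrib]
  simp only [ite_mul, one_mul, zero_mul, Finset.sum_ite_eq', Finset.mem_univ, ite_true]
  rw [if_neg hne, if_neg (Ne.symm hne')]
  simp [Fin.castSucc_inj]

def matY : Matrix (N e) (K e) ℝ :=
  Matrix.of fun a k =>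
    match a, k with
    | none, none => 1
    | none, some _ => 0
    | some _, none => 0
    | some (y, j), some (x, i) => if y = x then ee e j i else 0

noncomputable def matD : Matrix (N e) (K e) ℝ :=
  Matrix.of fun a k =>
    match a, k with
    | none, none => 1
    | none, some _ => 0
    | some _, none => 1 / ((e : ℝ) + 2)
    | some (y, j), some (x, i) => if y = x then (1 / ((e : ℝ) + 2)) * ee e j i else 0

lemma mub_mul_matY : mubCert (e + 2) * matY e = matD e := by
  have h2 : ((e : ℝ) + 2) ≠ 0 := by positivity
  ext a k
  rcases a with _ | ⟨z, i⟩ <;> rcases k with _ | ⟨x, i'⟩ <;>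
    simp only [mul_apply, Fintype.sum_option, Fintype.sum_prod_type,
      matY, matD, mubCert, of_apply] <;> push_cast
  · simp
  · -- row none, col some: ∑_y ∑_j (1/D) * (if y = x then ee j i' else 0) = 0
    simp only [mul_ite, mul_zero, mul_one, zero_mul, one_mul, zero_add]
    rw [Finset.sum_comm]
    simp [Finset.sum_ite_eq', ← Finset.mul_sum, sum_ee]
  · -- row some, col none
    simp [Finset.sum_ite_eq', Finset.sum_ite_eq]
  · -- row some(z,i), col some(x,i')
    rcases eq_or_ne z x with rfl | hz
    · simp only [mul_ite, mul_zero, mul_one, zero_mul, one_mul, zero_add, ite_mul]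
      rw [Finset.sum_comm]
      simp [Finset.sum_ite_eq', Finset.sum_ite_eq]
    · simp only [mul_ite, mul_zero, mul_one, zero_mul, one_mul, zero_add, ite_mul]
      rw [Finset.sum_comm]
      simp [Finset.sum_ite_eq', Finset.sum_ite_eq, hz, ← Finset.mul_sum, sum_ee]

noncomputable def matC : Matrix (K e) (K e) ℝ :=
  Matrix.of fun k l =>
    match k, l with
    | none, none => 1
    | none, some _ => 0
    | some _, none => 0
    | some (x, i), some (y, j) =>
        if x = y then (1 / ((e : ℝ) + 2)) * ((if i = j then 1 else 0) + 1) else 0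

lemma matY_mul_matD : (matY e)ᵀ * matD e = matC e := by
  ext k l
  rcases k with _ | ⟨x, i⟩ <;> rcases l with _ | ⟨y, j⟩ <;>
    simp only [mul_apply, transpose_apply, Fintype.sum_option, Fintype.sum_prod_type,
      matY, matD, matC, of_apply]
  · simp
  · simp
  · -- k some, l none : ∑_z ∑_m (if z = x then ee m i else 0) * (1/D) = 0
    simp only [ite_mul, zero_mul, mul_zero, one_mul, zero_add]
    apply Finset.sum_eq_zero
    intro x1 _
    split
    · rw [← Finset.sum_mul, sum_ee, zero_mul]
    · simp
  · -- k some(x,i), l some(y,j)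
    rcases eq_or_ne x y with rfl | hxy
    · simp only [ite_mul, zero_mul, mul_ite, mul_zero, zero_add, eq_self_iff_true, ite_true]
      have key : ∀ x1 : Fin (e + 3),
          (∑ x2 : Fin (e + 2), if x1 = x then
              if x1 = x then ee e x2 i * (1 / ((e:ℝ) + 2) * ee e x2 j) else 0 else 0)
          = if x1 = x then 1 / ((e:ℝ) + 2) * ((if i = j then 1 else 0) + 1) else 0 := by
        intro x1
        rcases eq_or_ne x1 x with rfl | h
        · simp only [eq_self_iff_true, ite_true]
          have expand : ∀ x2 : Fin (e + 2),
              ee e x2 i * (1 / ((e:ℝ) + 2) * ee e x2 j)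
              = (1 / ((e:ℝ) + 2)) * (ee e x2 i * ee e x2 j) := fun _ => by ring
          simp only [expand]
          rw [← Finset.mul_sum, sum_ee_mul]
        · simp [h]
      rw [Finset.sum_congr rfl (fun x1 _ => key x1),
        Finset.sum_ite_eq' Finset.univ x
          (fun _ => 1 / ((e:ℝ) + 2) * ((if i = j then 1 else 0) + 1))]
      simp
    · rw [if_neg hxy, zero_mul, zero_add]
      apply Finset.sum_eq_zero
      intro x1 _
      rcases eq_or_ne x1 x with rfl | h
      · apply Finset.sum_eq_zero
        intro x2 _
        rw [if_neg hxy, mul_zero]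
      · apply Finset.sum_eq_zero
        intro x2 _
        rw [if_neg h, zero_mul]

noncomputable def matE : Matrix (K e) (K e) ℝ :=
  Matrix.of fun k l =>
    match k, l with
    | none, none => 1
    | none, some _ => 0
    | some _, none => 0
    | some (x, i), some (y, j) =>
        if x = y then (if i = j then ((e : ℝ) + 2) else 0) - 1 else 0

lemma matC_mul_matE : matC e * matE e = 1 := by
  have h2 : ((e : ℝ) + 2) ≠ 0 := by positivity
  ext k l
  rcases k with _ | ⟨x, i⟩ <;> rcases l with _ | ⟨y, j⟩ <;>
    simp only [mul_apply, Fintype.sum_option, Fintype.sum_prod_type,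
      matC, matE, of_apply, Matrix.one_apply]
  · simp
  · simp
  · simp
  · have key : ∀ z : Fin (e + 3),
        (∑ m : Fin (e + 1),
          (if x = z then 1 / ((e:ℝ) + 2) * ((if i = m then 1 else 0) + 1) else 0) *
          (if z = y then (if m = j then ((e:ℝ) + 2) else 0) - 1 else 0))
        = if x = z then (if z = y then (if i = j then 1 else 0) else 0) else 0 := by
      intro z
      rcases eq_or_ne x z with rfl | h
      · simp only [eq_self_iff_true, ite_true]
        rcases eq_or_ne x y with rfl | h2'
        · simp only [eq_self_iff_true, ite_true]
          have expand : ∀ m : Fin (e + 1),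
              (1 / ((e:ℝ) + 2) * ((if i = m then 1 else 0) + 1)) *
                ((if m = j then ((e:ℝ) + 2) else 0) - 1)
              = (1 / ((e:ℝ) + 2)) * (((if i = m then (1:ℝ) else 0) * (if m = j then ((e:ℝ)+2) else 0))
                - (if i = m then (1:ℝ) else 0)
                + (if m = j then ((e:ℝ)+2) else 0) - 1) := fun m => by ring
          simp only [expand, ← Finset.mul_sum]
          rw [Finset.sum_sub_distrib, Finset.sum_add_distrib, Finset.sum_sub_distrib]
          have hA : ∑ m : Fin (e + 1), (if i = m then (1:ℝ) else 0) * (if m = j then ((e:ℝ)+2) else 0)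
              = if i = j then ((e:ℝ)+2) else 0 := by
            simp only [ite_mul, one_mul, zero_mul, Finset.sum_ite_eq, Finset.mem_univ, ite_true]
          have hB : ∑ m : Fin (e + 1), (if i = m then (1:ℝ) else 0) = 1 := by
            simp [Finset.sum_ite_eq]
          have hC' : ∑ m : Fin (e + 1), (if m = j then ((e:ℝ)+2) else 0) = (e:ℝ)+2 := by
            simp [Finset.sum_ite_eq']
          have hD' : ∑ _m : Fin (e + 1), (1:ℝ) = (e:ℝ)+1 := by
            rw [Finset.sum_const, Finset.card_univ, Fintype.card_fin, nsmul_eq_mul]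
            push_cast; ring
          rw [hA, hB, hC', hD']
          rcases eq_or_ne i j with rfl | hij
          · simp only [eq_self_iff_true, ite_true]; field_simp; ring
          · simp only [if_neg hij]; field_simp; ring
        · simp only [if_neg h2']
          apply Finset.sum_eq_zero; intro m _; simp
      · simp only [if_neg h]
        apply Finset.sum_eq_zero; intro m _; rw [zero_mul]
    rw [zero_mul, zero_add, Finset.sum_congr rfl (fun z _ => key z),
      Finset.sum_ite_eq Finset.univ x
        (fun z => if z = y then (if i = j then (1:ℝ) else 0) else 0)]
    rcases eq_or_ne x y with rfl | hxy <;> rcases eq_or_ne i j with rfl | hij <;>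
      simp [Prod.ext_iff] <;> simp [hij]

lemma card_K : Fintype.card (K e) = (e + 2) ^ 2 := by
  simp [K]
  ring

lemma mub_posSemidef : (mubCert (e + 2)).PosSemidef := by
  rw [← matA_fact]
  have h := Matrix.posSemidef_conjTranspose_mul_self (matA e)
  rwa [Matrix.conjTranspose] at h
  -- may need adjustment

lemma mub_rank_ge : (e + 2) ^ 2 ≤ (mubCert (e + 2)).rank := by
  have hC : (matC e).rank = (e + 2) ^ 2 := by
    rw [Matrix.rank_of_isUnit _ (IsUnit.of_mul_eq_one _ (matC_mul_matE e)), card_K]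
  calc (e + 2) ^ 2 = (matC e).rank := hC.symm
    _ = ((matY e)ᵀ * (mubCert (e + 2) * matY e)).rank := by rw [mub_mul_matY, matY_mul_matD]
    _ ≤ (mubCert (e + 2) * matY e).rank := Matrix.rank_mul_le_right _ _
    _ ≤ (mubCert (e + 2)).rank := Matrix.rank_mul_le_left _ _

lemma mub_rank_le : (mubCert (e + 2)).rank ≤ (e + 2) ^ 2 := by
  have hker : LinearMap.range (matZ e).mulVecLin ≤ LinearMap.ker (mubCert (e + 2)).mulVecLin := by
    rintro _ ⟨v, rfl⟩
    simp only [LinearMap.mem_ker, Matrix.mulVecLin_apply, Matrix.mulVec_mulVec,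
      mub_mul_matZ, Matrix.zero_mulVec]
  have hZ : e + 3 ≤ (matZ e).rank := by
    calc e + 3 = (1 : Matrix (Fin (e + 3)) (Fin (e + 3)) ℝ).rank := by
          rw [Matrix.rank_one, Fintype.card_fin]
      _ = (matY' e * matZ e).rank := by rw [matY'_mul_matZ]
      _ ≤ (matZ e).rank := Matrix.rank_mul_le_right _ _
  have hkerge : e + 3 ≤ Module.finrank ℝ (LinearMap.ker (mubCert (e + 2)).mulVecLin) :=
    le_trans hZ (Submodule.finrank_mono hker)
  have hsum := LinearMap.finrank_range_add_finrank_ker (mubCert (e + 2)).mulVecLin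
  rw [Module.finrank_pi] at hsum
  have hcard : Fintype.card (N e) = (e + 2) ^ 2 + (e + 3) := by
    simp [N]
    ring
  rw [hcard] at hsum
  have hrank : (mubCert (e + 2)).rank
      = Module.finrank ℝ (LinearMap.range (mubCert (e + 2)).mulVecLin) := rfl
  omega

end Stmt16Aux

/-- the MUB certificate `T₁` is positive semidefinite of rank `d²`. -/
theorem stmt16 (d : ℕ) (hd : 2 ≤ d) :
    (mubCert d).PosSemidef ∧ (mubCert d).rank = d ^ 2 := by
  obtain ⟨e, rfl⟩ : ∃ e, d = e + 2 := ⟨d - 2, by omega⟩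
  exact ⟨Stmt16Aux.mub_posSemidef e,
    le_antisymm (Stmt16Aux.mub_rank_le e) (Stmt16Aux.mub_rank_ge e)⟩
end

section
/- Let N ∈ ℕ, let H be a complex Hilbert space, and let |α⟩ ∈ H be vectors indexed by words α ∈ [N]^* such that the Gram matrix M defined by M_{α,β} = ⟨α|β⟩ satisfies M_{α,β} = M_{γ,δ} whenever (α,β) ∼ (γ,δ). For each x ∈ [N], let P_x ∈ B(H) be the orthogonal projection onto the closure of the span of {|xα⟩ : α ∈ [N]^*} (where xα denotes concatenation). Then P_x |α⟩ = |xα⟩ for every α ∈ [N]^*. -/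
/-- `η(α)`: first collapse consecutive equal letters (`a₁^{r₁}⋯a_n^{r_n} ↦ a₁⋯a_n`); if the
first and last letters of the result agree, drop the last letter (and `η(0) = 0`). -/
def wordEta {N : ℕ} (w : Word N) : Word N :=
  let c := w.destutter (· ≠ ·)
  if c.head? = c.getLast? then c.dropLast else c

/-- `(α,β) ∼ (γ,δ)` iff `η(α†β)` is a cyclic rotation of `η(γ†δ)`,
where `α†` is the reversal of `α`. -/
def wordSim {N : ℕ} (α β γ δ : Word N) : Prop :=
  List.IsRotated (wordEta (α.reverse ++ β)) (wordEta (γ.reverse ++ δ))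

lemma destutter'_dup {α : Type*} (R : α → α → Prop) [DecidableRel R] (hR : ∀ a, ¬ R a a)
    (x : α) (l r : List α) (b : α) :
    (l ++ x :: x :: r).destutter' R b = (l ++ x :: r).destutter' R b := by
  induction l generalizing b with
  | nil =>
    by_cases h : R b x
    · simp only [List.nil_append, List.destutter'_cons_pos _ h,
        List.destutter'_cons_neg _ (hR x)]
    · simp only [List.nil_append, List.destutter'_cons_neg _ h]
  | cons a l ih =>
    by_cases h : R b a
    · simp only [List.cons_append, List.destutter'_cons_pos _ h, ih]
    · simp only [List.cons_append, List.destutter'_cons_neg _ h, ih]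

lemma destutter_dup {α : Type*} [DecidableEq α] (x : α) (l r : List α) :
    (l ++ x :: x :: r).destutter (· ≠ ·) = (l ++ x :: r).destutter (· ≠ ·) := by
  cases l with
  | nil =>
    simp only [List.nil_append, List.destutter_cons', r.destutter'_cons_neg (show ¬(x ≠ x) from not_not_intro rfl)]
  | cons a l =>
    simp only [List.cons_append, List.destutter_cons',
      destutter'_dup (· ≠ ·) (fun a => by simp) x l r a]

/-- key step in the proof of Theorem `thm: Synchronous NPA hierarchy`:
if the Gram matrix `M_{α,β} = ⟨α|β⟩` of a family of vectors `|α⟩ ∈ H` indexed by words is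
invariant under `∼`, and `P_x` is the orthogonal projection onto the closure of the span of
`{|xα⟩ : α ∈ [N]^*}`, then `P_x|α⟩ = |xα⟩` for every word `α`. -/
theorem stmt19 (N : ℕ) (H : Type) [NormedAddCommGroup H] [InnerProductSpace ℂ H]
    [CompleteSpace H] (v : Word N → H)
    (hsim : ∀ α β γ δ : Word N, wordSim α β γ δ →
      (inner ℂ (v α) (v β) : ℂ) = inner ℂ (v γ) (v δ))
    (P : Fin N → H →L[ℂ] H)
    (hP : ∀ (x : Fin N) (h : H), P x h =
      (Submodule.orthogonalProjectionOnto
        (Submodule.span ℂ (Set.range fun α : Word N => v (x :: α))).topologicalClosure h : H)) :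
    ∀ (x : Fin N) (α : Word N), P x (v α) = v (x :: α) := by
  intro x α
  rw [hP]
  set K := Submodule.span ℂ (Set.range fun α : Word N => v (x :: α)) with hK
  have hmem : v (x :: α) ∈ K.topologicalClosure :=
    K.le_topologicalClosure (Submodule.subset_span ⟨α, rfl⟩)
  have hinner : ∀ β : Word N, (inner ℂ (v α - v (x :: α)) (v (x :: β)) : ℂ) = 0 := by
    intro β
    have hsim' : wordSim α (x :: β) (x :: α) (x :: β) := by
      unfold wordSim wordEta
      have : ((x :: α).reverse ++ x :: β).destutter (· ≠ ·)
          = (α.reverse ++ x :: β).destutter (· ≠ ·) := by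
        have := destutter_dup x α.reverse β
        simpa using this
      rw [this]
    have := hsim α (x :: β) (x :: α) (x :: β) hsim'
    rw [inner_sub_left, this, sub_self]
  have horth : v α - v (x :: α) ∈ Kᗮ := by
    rw [Submodule.mem_orthogonal']
    intro u hu
    induction hu using Submodule.span_induction with
    | mem u hu => obtain ⟨β, rfl⟩ := hu; exact hinner β
    | zero => simp
    | add u w _ _ hu hw => rw [inner_add_right, hu, hw, add_zero]
    | smul c u _ hu => rw [inner_smul_right, hu, mul_zero]
  refine Submodule.eq_starProjection_of_mem_of_inner_eq_zero hmem ?_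
  intro w hw
  rw [← K.orthogonal_orthogonal_eq_closure] at hw
  exact (Submodule.mem_orthogonal _ _).mp hw _ horth
end
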